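/- Let A be a real m×n matrix with m ≥ n, rank(A) = n, all rows nonzero, and Ax = b, and let σ_min > 0 satisfy ‖A v‖ ≥ σ_min·‖v‖ for all v ∈ ℝ^n. Fix x_0 ∈ ℝ^n and k ∈ ℕ, and suppose that no choice of at most k successive projections starting from x_0 produces the exact solution x. Then E[ log(‖x_k − x‖²) ] ≤ k·log(1 − σ_min²/‖A‖_F²) + log(‖x_0 − x‖²), where E denotes expectation for the random Kaczmarz process of length k. -/

import Mathlib

noncomputable section

/-- The `i`-th row of `A` as a vector in Euclidean space. -/
def rowv {m n : ℕ} (A : Matrix (Fin m) (Fin n) ℝ) (i : Fin m) : EuclideanSpace ℝ (Fin n) :=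
  WithLp.toLp 2 (fun j => A i j)

/-- Matrix-vector multiplication, landing in Euclidean space. -/
def mulV {m n : ℕ} (A : Matrix (Fin m) (Fin n) ℝ) (v : EuclideanSpace ℝ (Fin n)) :
    EuclideanSpace ℝ (Fin m) := WithLp.toLp 2 (fun i => ∑ j, A i j * v j)

/-- The square of the Frobenius norm `‖A‖_F²`. -/
def frobSq {m n : ℕ} (A : Matrix (Fin m) (Fin n) ℝ) : ℝ := ∑ i, ∑ j, (A i j) ^ 2

/-- The operator norm `‖A‖` (ℓ² → ℓ²). -/
def opN {m n : ℕ} (A : Matrix (Fin m) (Fin n) ℝ) : ℝ :=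
  ‖LinearMap.toContinuousLinearMap (Matrix.toEuclideanLin A)‖

/-- Orthogonal projection of `w` onto the hyperplane `{v : ⟨a_i, v⟩ = b_i}`. -/
def proj {m n : ℕ} (A : Matrix (Fin m) (Fin n) ℝ) (b : EuclideanSpace ℝ (Fin m)) (i : Fin m)
    (w : EuclideanSpace ℝ (Fin n)) : EuclideanSpace ℝ (Fin n) :=
  w + ((b i - inner (𝕜 := ℝ) (rowv A i) w) / ‖rowv A i‖ ^ 2) • rowv A i

/-- The Kaczmarz trajectory: `traj A b x0 ω j` is `x_j(ω) = π_{ω_j} ⋯ π_{ω_1} x_0`. -/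
def traj {m n k : ℕ} (A : Matrix (Fin m) (Fin n) ℝ) (b : EuclideanSpace ℝ (Fin m))
    (x0 : EuclideanSpace ℝ (Fin n)) (ω : Fin k → Fin m) : ℕ → EuclideanSpace ℝ (Fin n)
  | 0 => x0
  | j + 1 => if h : j < k then proj A b (ω ⟨j, h⟩) (traj A b x0 ω j) else traj A b x0 ω j

/-- The weight `∏_j ‖a_{ω_j}‖²/‖A‖_F²` of an index sequence `ω` for the random Kaczmarz
process. -/
def wt {m n k : ℕ} (A : Matrix (Fin m) (Fin n) ℝ) (ω : Fin k → Fin m) : ℝ :=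
  ∏ j, ‖rowv A (ω j)‖ ^ 2 / frobSq A

end


open Finset Real

lemma traj_succ {m n k : ℕ} (A : Matrix (Fin m) (Fin n) ℝ) (b : EuclideanSpace ℝ (Fin m))
    (x0 : EuclideanSpace ℝ (Fin n)) (ω : Fin k → Fin m) {j : ℕ} (h : j < k) :
    traj A b x0 ω (j + 1) = proj A b (ω ⟨j, h⟩) (traj A b x0 ω j) := by
  simp [traj, h]

lemma traj_congr {m n k : ℕ} (A : Matrix (Fin m) (Fin n) ℝ) (b : EuclideanSpace ℝ (Fin m))
    (x0 : EuclideanSpace ℝ (Fin n)) (ω ω' : Fin k → Fin m) (j : ℕ)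
    (h : ∀ i : Fin k, (i : ℕ) < j → ω i = ω' i) :
    traj A b x0 ω j = traj A b x0 ω' j := by
  induction j with
  | zero => rfl
  | succ j ih =>
    have ih' := ih (fun i hi => h i (Nat.lt_succ_of_lt hi))
    by_cases hj : j < k
    · rw [traj_succ A b x0 ω hj, traj_succ A b x0 ω' hj, h ⟨j, hj⟩ (Nat.lt_succ_self j), ih']
    · simp [traj, hj, ih']

lemma norm_sq_eq {n : ℕ} (w : EuclideanSpace ℝ (Fin n)) : ‖w‖ ^ 2 = ∑ i, (w i) ^ 2 := by
  rw [EuclideanSpace.norm_sq_eq]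
  simp [Real.norm_eq_abs, sq_abs]

lemma frobSq_eq {m n : ℕ} (A : Matrix (Fin m) (Fin n) ℝ) :
    frobSq A = ∑ i, ‖rowv A i‖ ^ 2 := by
  simp [frobSq, norm_sq_eq, rowv]

lemma mulV_apply_inner {m n : ℕ} (A : Matrix (Fin m) (Fin n) ℝ) (v : EuclideanSpace ℝ (Fin n))
    (i : Fin m) : mulV A v i = inner (𝕜 := ℝ) (rowv A i) v := by
  simp [mulV, rowv, PiLp.inner_apply, RCLike.inner_apply, mul_comm]

lemma norm_proj_sub_sq {m n : ℕ} (A : Matrix (Fin m) (Fin n) ℝ)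
    (x : EuclideanSpace ℝ (Fin n)) (b : EuclideanSpace ℝ (Fin m)) (hAx : mulV A x = b)
    (i : Fin m) (hrow : rowv A i ≠ 0) (y : EuclideanSpace ℝ (Fin n)) :
    ‖proj A b i y - x‖ ^ 2
      = ‖y - x‖ ^ 2 - (inner (𝕜 := ℝ) (rowv A i) (y - x)) ^ 2 / ‖rowv A i‖ ^ 2 := by
  have ha : ‖rowv A i‖ ≠ 0 := norm_ne_zero_iff.2 hrow
  have hbi : b i = inner (𝕜 := ℝ) (rowv A i) x := by rw [← hAx, mulV_apply_inner]
  have h1 : proj A b i y - x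
      = (y - x) - ((inner (𝕜 := ℝ) (rowv A i) (y - x)) / ‖rowv A i‖ ^ 2) • rowv A i := by
    simp only [proj, hbi, inner_sub_right]
    module
  rw [h1, norm_sub_sq_real, norm_smul, real_inner_smul_right, mul_pow,
    real_inner_comm (y - x) (rowv A i)]
  rw [Real.norm_eq_abs, sq_abs]
  field_simp
  ring

lemma step_bound {m n : ℕ} (hm : 0 < m) (A : Matrix (Fin m) (Fin n) ℝ)
    (hrows : ∀ i, rowv A i ≠ 0)
    (x : EuclideanSpace ℝ (Fin n)) (b : EuclideanSpace ℝ (Fin m)) (hAx : mulV A x = b)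
    (σmin : ℝ) (hσ : 0 < σmin)
    (hlow : ∀ v : EuclideanSpace ℝ (Fin n), σmin * ‖v‖ ≤ ‖mulV A v‖)
    (hF : 0 < frobSq A) (y : EuclideanSpace ℝ (Fin n)) (hy : y ≠ x)
    (hproj : ∀ i, proj A b i y ≠ x) :
    ∑ i, (‖rowv A i‖ ^ 2 / frobSq A) * Real.log (‖proj A b i y - x‖ ^ 2)
      ≤ Real.log (1 - σmin ^ 2 / frobSq A) + Real.log (‖y - x‖ ^ 2) := by
  haveI : Nonempty (Fin m) := ⟨⟨0, hm⟩⟩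
  set p : Fin m → ℝ := fun i => ‖rowv A i‖ ^ 2 / frobSq A with hp_def
  set q : Fin m → ℝ := fun i => ‖proj A b i y - x‖ ^ 2 with hq_def
  have hp : ∀ i, 0 < p i := fun i => div_pos (pow_pos (norm_pos_iff.2 (hrows i)) 2) hF
  have hq : ∀ i, 0 < q i := fun i =>
    pow_pos (norm_pos_iff.2 (sub_ne_zero.2 (hproj i))) 2
  have hpsum : ∑ i, p i = 1 := by
    simp only [hp_def, ← Finset.sum_div, ← frobSq_eq]
    exact div_self hF.ne'
  have he : (0:ℝ) < ‖y - x‖ ^ 2 := pow_pos (norm_pos_iff.2 (sub_ne_zero.2 hy)) 2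
  have jensen : ∑ i, p i * Real.log (q i) ≤ Real.log (∑ i, p i * q i) := by
    have := (strictConcaveOn_log_Ioi.concaveOn).le_map_sum (t := Finset.univ) (w := p) (p := q)
      (fun i _ => (hp i).le) hpsum (fun i _ => hq i)
    simpa [smul_eq_mul] using this
  have hS : ∑ i, p i * q i = ‖y - x‖ ^ 2 - ‖mulV A (y - x)‖ ^ 2 / frobSq A := by
    have hterm : ∀ i, p i * q i
        = p i * ‖y - x‖ ^ 2 - (inner (𝕜 := ℝ) (rowv A i) (y - x)) ^ 2 / frobSq A := by
      intro i
      have ha : (‖rowv A i‖ : ℝ) ^ 2 ≠ 0 := (pow_pos (norm_pos_iff.2 (hrows i)) 2).ne'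
      have ha2 : ‖rowv A i‖ ≠ 0 := norm_ne_zero_iff.2 (hrows i)
      simp only [hq_def, norm_proj_sub_sq A x b hAx i (hrows i) y, hp_def]
      field_simp
    rw [Finset.sum_congr rfl (fun i _ => hterm i), Finset.sum_sub_distrib,
      ← Finset.sum_mul, hpsum, one_mul, ← Finset.sum_div]
    simp only [norm_sq_eq, mulV_apply_inner]
  have hAe : σmin ^ 2 * ‖y - x‖ ^ 2 ≤ ‖mulV A (y - x)‖ ^ 2 := by
    have h1 := hlow (y - x)
    have h2 : (σmin * ‖y - x‖) ^ 2 ≤ ‖mulV A (y - x)‖ ^ 2 :=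
      pow_le_pow_left₀ (mul_nonneg hσ.le (norm_nonneg _)) h1 2
    calc σmin ^ 2 * ‖y - x‖ ^ 2 = (σmin * ‖y - x‖) ^ 2 := by ring
    _ ≤ _ := h2
  have hSle : ∑ i, p i * q i ≤ (1 - σmin ^ 2 / frobSq A) * ‖y - x‖ ^ 2 := by
    rw [hS]
    have h2 : σmin ^ 2 * ‖y - x‖ ^ 2 / frobSq A ≤ ‖mulV A (y - x)‖ ^ 2 / frobSq A := by
      gcongr
    have h3 : (1 - σmin ^ 2 / frobSq A) * ‖y - x‖ ^ 2
        = ‖y - x‖ ^ 2 - σmin ^ 2 * ‖y - x‖ ^ 2 / frobSq A := by ring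
    linarith
  have hSpos : 0 < ∑ i, p i * q i :=
    Finset.sum_pos (fun i _ => mul_pos (hp i) (hq i)) Finset.univ_nonempty
  have hfac : 0 < (1 - σmin ^ 2 / frobSq A) * ‖y - x‖ ^ 2 := lt_of_lt_of_le hSpos hSle
  have h1σ : 0 < 1 - σmin ^ 2 / frobSq A := by nlinarith
  calc ∑ i, p i * Real.log (q i) ≤ Real.log (∑ i, p i * q i) := jensen
    _ ≤ Real.log ((1 - σmin ^ 2 / frobSq A) * ‖y - x‖ ^ 2) := Real.log_le_log hSpos hSle
    _ = Real.log (1 - σmin ^ 2 / frobSq A) + Real.log (‖y - x‖ ^ 2) :=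
        Real.log_mul h1σ.ne' he.ne'

/-- **Logarithmic Strohmer–Vershynin bound.** If `σ_min > 0` is a lower bound for `A`,
i.e. `‖Av‖ ≥ σ_min ‖v‖` for all `v`, and no choice of at most `k` projections from `x₀`
gives the exact solution, then
`E log(‖x_k − x‖²) ≤ k log(1 − σ_min²/‖A‖_F²) + log(‖x₀ − x‖²)`. -/
theorem log_strohmer_vershynin {m n : ℕ} (A : Matrix (Fin m) (Fin n) ℝ) (hmn : m ≥ n)
    (hrank : A.rank = n) (hrows : ∀ i, rowv A i ≠ 0)
    (x : EuclideanSpace ℝ (Fin n)) (b : EuclideanSpace ℝ (Fin m)) (hAx : mulV A x = b)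
    (σmin : ℝ) (hσ : 0 < σmin) (hlow : ∀ v : EuclideanSpace ℝ (Fin n), σmin * ‖v‖ ≤ ‖mulV A v‖)
    (x0 : EuclideanSpace ℝ (Fin n)) (k : ℕ)
    (hne : ∀ ω : Fin k → Fin m, ∀ j ≤ k, traj A b x0 ω j ≠ x) :
    ∑ ω : Fin k → Fin m, wt A ω * Real.log (‖traj A b x0 ω k - x‖ ^ 2) ≤
      (k : ℝ) * Real.log (1 - σmin ^ 2 / frobSq A) + Real.log (‖x0 - x‖ ^ 2) := by
  rcases Nat.eq_zero_or_pos m with hm | hm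
  · -- degenerate case m = 0, hence n = 0
    subst hm
    have hn : n = 0 := Nat.le_zero.1 hmn
    subst hn
    have hx0 : x0 - x = 0 := Subsingleton.elim _ _
    have hF0 : frobSq A = 0 := by simp [frobSq]
    have hlog0 : ∀ ω : Fin k → Fin 0, Real.log (‖traj A b x0 ω k - x‖ ^ 2) = 0 := by
      intro ω
      have h : traj A b x0 ω k - x = 0 := Subsingleton.elim _ _
      simp [h]
    simp [hlog0, hF0, hx0]
  · haveI : Nonempty (Fin m) := ⟨⟨0, hm⟩⟩
    have hF : 0 < frobSq A := by
      rw [frobSq_eq]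
      exact Finset.sum_pos' (fun i _ => pow_nonneg (norm_nonneg _) 2)
        ⟨⟨0, hm⟩, Finset.mem_univ _, pow_pos (norm_pos_iff.2 (hrows _)) 2⟩
    set L := Real.log (1 - σmin ^ 2 / frobSq A) with hL
    set p : Fin m → ℝ := fun i => ‖rowv A i‖ ^ 2 / frobSq A with hp_def
    have hp0 : ∀ i, 0 ≤ p i := fun i => div_nonneg (pow_nonneg (norm_nonneg _) 2) hF.le
    have hpsum : ∑ i, p i = 1 := by
      simp only [hp_def, ← Finset.sum_div, ← frobSq_eq]
      exact div_self hF.ne'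
    have hwt : ∀ ω : Fin k → Fin m, wt A ω = ∏ i, p (ω i) := fun ω => rfl
    have hsum1 : ∑ ω : Fin k → Fin m, wt A ω = 1 := by
      have h := Finset.prod_univ_sum (fun _ : Fin k => (Finset.univ : Finset (Fin m)))
        (fun _ i => p i)
      rw [Fintype.piFinset_univ] at h
      calc ∑ ω : Fin k → Fin m, wt A ω = ∑ ω : Fin k → Fin m, ∏ i, p (ω i) :=
            Finset.sum_congr rfl fun ω _ => hwt ω
        _ = ∏ _i : Fin k, ∑ i, p i := h.symm
        _ = 1 := by rw [hpsum]; simp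
    have key : ∀ j, j ≤ k →
        ∑ ω : Fin k → Fin m, wt A ω * Real.log (‖traj A b x0 ω j - x‖ ^ 2)
          ≤ (j : ℝ) * L + Real.log (‖x0 - x‖ ^ 2) := by
      intro j
      induction j with
      | zero =>
        intro _
        have : ∀ ω : Fin k → Fin m, traj A b x0 ω 0 = x0 := fun _ => rfl
        simp only [this, ← Finset.sum_mul, hsum1, one_mul, Nat.cast_zero, zero_mul, zero_add,
          le_refl]
      | succ j ih =>
        intro hj
        have hjk : j < k := hj
        have ihj := ih (le_of_lt hjk)
        set jf : Fin k := ⟨j, hjk⟩ with hjf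
        set e := Equiv.funSplitAt jf (Fin m) with he
        have hne_j : ∀ (c : Fin m) (g : {i // i ≠ jf} → Fin m) (i : Fin k) (h : i ≠ jf),
            e.symm (c, g) i = g ⟨i, h⟩ := by
          intro c g i h
          simp [he, Equiv.funSplitAt, Equiv.piSplitAt, h]
        have heq_j : ∀ (c : Fin m) (g : {i // i ≠ jf} → Fin m), e.symm (c, g) jf = c := by
          intro c g
          simp [he, Equiv.funSplitAt, Equiv.piSplitAt]
        set c₀ : Fin m := ⟨0, hm⟩ with hc₀
        set y : ({i // i ≠ jf} → Fin m) → EuclideanSpace ℝ (Fin n) :=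
          fun g => traj A b x0 (e.symm (c₀, g)) j with hy_def
        have htraj_indep : ∀ (c : Fin m) (g : {i // i ≠ jf} → Fin m),
            traj A b x0 (e.symm (c, g)) j = y g := by
          intro c g
          apply traj_congr
          intro i hi
          have hij : i ≠ jf := by
            intro h
            exact Nat.ne_of_lt hi (congrArg Fin.val h)
          rw [hne_j c g i hij, hne_j c₀ g i hij]
        have htraj_succ : ∀ (c : Fin m) (g : {i // i ≠ jf} → Fin m),
            traj A b x0 (e.symm (c, g)) (j + 1) = proj A b c (y g) := by
          intro c g
          rw [traj_succ A b x0 _ hjk, htraj_indep c g]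
          exact congrArg (fun i => proj A b i (y g)) (heq_j c g)
        set W : ({i // i ≠ jf} → Fin m) → ℝ := fun g => ∏ i, p (g i) with hW_def
        have hW0 : ∀ g, 0 ≤ W g := fun g => Finset.prod_nonneg fun i _ => hp0 _
        have hwt_split : ∀ (c : Fin m) (g : {i // i ≠ jf} → Fin m),
            wt A (e.symm (c, g)) = p c * W g := by
          intro c g
          rw [hwt, Fintype.prod_eq_mul_prod_compl jf, heq_j]
          congr 1
          rw [Finset.prod_subtype ({jf}ᶜ : Finset (Fin k)) (p := fun i => i ≠ jf)
            (fun i => by simp) (fun i => p (e.symm (c, g) i))]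
          exact Finset.prod_congr rfl fun i _ => by rw [hne_j c g i i.2]
        have hsplit : ∀ f : EuclideanSpace ℝ (Fin n) → ℝ,
            ∑ ω : Fin k → Fin m, wt A ω * f (traj A b x0 ω j) = ∑ g, W g * f (y g) := by
          intro f
          rw [← Equiv.sum_comp e.symm (fun ω => wt A ω * f (traj A b x0 ω j)),
            Fintype.sum_prod_type]
          have h1 : ∀ (c : Fin m) (g : {i // i ≠ jf} → Fin m),
              wt A (e.symm (c, g)) * f (traj A b x0 (e.symm (c, g)) j)
                = p c * (W g * f (y g)) := by
            intro c g
            rw [hwt_split, htraj_indep]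
            ring
          calc (∑ c, ∑ g, wt A (e.symm (c, g)) * f (traj A b x0 (e.symm (c, g)) j))
              = ∑ c, ∑ g, p c * (W g * f (y g)) :=
                Finset.sum_congr rfl fun c _ => Finset.sum_congr rfl fun g _ => h1 c g
            _ = ∑ c, p c * ∑ g, W g * f (y g) := by
                exact Finset.sum_congr rfl fun c _ => (Finset.mul_sum _ _ _).symm
            _ = ∑ g, W g * f (y g) := by rw [← Finset.sum_mul, hpsum, one_mul]
        have hWsum : ∑ g, W g = 1 := by
          have h := hsplit (fun _ => 1)
          simp only [mul_one] at h
          rw [hsum1] at h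
          exact h.symm
        have hsplit1 : ∑ ω : Fin k → Fin m, wt A ω * Real.log (‖traj A b x0 ω (j + 1) - x‖ ^ 2)
            = ∑ g, W g * ∑ c, p c * Real.log (‖proj A b c (y g) - x‖ ^ 2) := by
          rw [← Equiv.sum_comp e.symm
            (fun ω => wt A ω * Real.log (‖traj A b x0 ω (j + 1) - x‖ ^ 2)),
            Fintype.sum_prod_type, Finset.sum_comm]
          refine Finset.sum_congr rfl fun g _ => ?_
          rw [Finset.mul_sum]
          refine Finset.sum_congr rfl fun c _ => ?_
          rw [hwt_split, htraj_succ]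
          ring
        have hstep : ∀ g, ∑ c, p c * Real.log (‖proj A b c (y g) - x‖ ^ 2)
            ≤ L + Real.log (‖y g - x‖ ^ 2) := by
          intro g
          refine step_bound hm A hrows x b hAx σmin hσ hlow hF (y g) ?_ ?_
          · exact hne (e.symm (c₀, g)) j (le_of_lt hjk)
          · intro c
            rw [← htraj_succ c g]
            exact hne (e.symm (c, g)) (j + 1) hj
        calc ∑ ω : Fin k → Fin m, wt A ω * Real.log (‖traj A b x0 ω (j + 1) - x‖ ^ 2)
            = ∑ g, W g * ∑ c, p c * Real.log (‖proj A b c (y g) - x‖ ^ 2) := hsplit1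
          _ ≤ ∑ g, W g * (L + Real.log (‖y g - x‖ ^ 2)) :=
              Finset.sum_le_sum fun g _ => mul_le_mul_of_nonneg_left (hstep g) (hW0 g)
          _ = L * ∑ g, W g + ∑ g, W g * Real.log (‖y g - x‖ ^ 2) := by
              simp only [mul_add, Finset.sum_add_distrib, Finset.mul_sum]
              congr 1
              exact Finset.sum_congr rfl fun g _ => by ring
          _ = L + ∑ ω : Fin k → Fin m, wt A ω * Real.log (‖traj A b x0 ω j - x‖ ^ 2) := by
              rw [hWsum, mul_one, hsplit (fun v => Real.log (‖v - x‖ ^ 2))]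
          _ ≤ L + ((j : ℝ) * L + Real.log (‖x0 - x‖ ^ 2)) := by linarith
          _ = ((j : ℕ) + 1 : ℝ) * L + Real.log (‖x0 - x‖ ^ 2) := by ring
          _ = ((j + 1 : ℕ) : ℝ) * L + Real.log (‖x0 - x‖ ^ 2) := by push_cast; ring
    exact key k le_rfl
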